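/- For $u \in (0,1)^n$, let $\Delta_n(u)$ be the $n \times n$ real symmetric matrix $\Delta_n(u) = \sum_{i=1}^n \left[ (E_{ii} + E_{i+1,i+1}) \left( \frac{1}{1-u_i^4} - \frac12 \right) + (E_{i,i+1} + E_{i+1,i}) \frac{-u_i^2}{1-u_i^4} \right]$, where $E_{ij}$ are matrix units and indices are taken modulo $n$. Then $\det \Delta_n(u) = \frac{(1 - u_1^2 u_2^2 \cdots u_n^2)^2}{(1-u_1^4)(1-u_2^4)\cdots(1-u_n^4)}$. -/

import Mathlib

open Matrix

open Fin.NatCast in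
/-- On `Fin (m+2)`, a permutation with `σ i ∈ {i, i+1}` for all `i` is either the
identity or the full rotation. -/
lemma perm_eq_one_or_rotate (m : ℕ) (σ : Equiv.Perm (Fin (m + 2)))
    (h : ∀ i, σ i = i ∨ σ i = i + 1) : σ = 1 ∨ σ = finRotate (m + 2) := by
  by_cases h1 : ∀ i, σ i = i
  · left; ext i; simp [h1 i]
  · right
    push_neg at h1
    obtain ⟨j, hj⟩ := h1
    have hj' : σ j = j + 1 := (h j).resolve_left hj
    have key : ∀ k : ℕ, σ (j + (k : Fin (m + 2))) = j + (k : Fin (m + 2)) + 1 := by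
      intro k
      induction k with
      | zero => simpa using hj'
      | succ k ih =>
        have hc : ((k + 1 : ℕ) : Fin (m + 2)) = (k : Fin (m + 2)) + 1 := by
          push_cast; ring
        rw [hc]
        rcases h (j + ((k : Fin (m+2)) + 1)) with h2 | h2
        · exfalso
          have h5 : j + ((k : Fin (m+2)) + 1) = j + (k : Fin (m+2)) := by
            apply σ.injective
            rw [h2, ih, add_assoc]
          have h6 : (k : Fin (m+2)) + 1 = (k : Fin (m+2)) + 0 := by
            rw [add_zero]; exact add_left_cancel h5
          exact one_ne_zero (add_left_cancel h6)
        · rw [h2]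
    ext i
    have h7 : σ (j + ((i - j).val : Fin (m+2))) = j + ((i - j).val : Fin (m+2)) + 1 :=
      key (i - j).val
    rw [Fin.cast_val_eq_self] at h7
    simp only [add_sub_cancel] at h7
    simp [h7]

/-- Determinant of the cyclic lower-bidiagonal matrix with unit diagonal
and cyclic subdiagonal `c`, for size `≥ 2`. -/
lemma det_cyclic_bidiag (m : ℕ) (c : Fin (m + 2) → ℝ) :
    (Matrix.of fun j k : Fin (m + 2) =>
      (if j = k then (1:ℝ) else 0) + (if j = k + 1 then c k else 0)).det
    = 1 + (-1 : ℝ) ^ (m + 1) * ∏ k, c k := by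
  have h1 : ∀ i : Fin (m + 2), i ≠ i + 1 := by
    intro i hi
    exact one_ne_zero ((left_eq_add).mp hi)
  have hne : (1 : Equiv.Perm (Fin (m + 2))) ≠ finRotate (m + 2) := by
    intro hcon
    exact h1 0 (by
      conv_lhs => rw [show (0 : Fin (m+2)) = (1 : Equiv.Perm (Fin (m+2))) 0 from rfl, hcon,
        finRotate_succ_apply])
  rw [Matrix.det_apply,
    Finset.sum_eq_add_of_mem 1 (finRotate (m + 2)) (Finset.mem_univ _) (Finset.mem_univ _) hne]
  · simp only [Equiv.Perm.sign_one, one_smul, Equiv.Perm.one_apply, sign_finRotate,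
      Matrix.of_apply, finRotate_succ_apply]
    have h2 : ∀ i : Fin (m + 2), i + 1 ≠ i := fun i hx => h1 i hx.symm
    simp [h1, h2, Units.smul_def]
  · intro σ _ hσ
    have hna : ¬ ∀ i, σ i = i ∨ σ i = i + 1 := by
      intro hall
      rcases perm_eq_one_or_rotate m σ hall with h | h
      exacts [hσ.1 h, hσ.2 h]
    push_neg at hna
    obtain ⟨i, hi1, hi2⟩ := hna
    apply smul_eq_zero_of_right
    apply Finset.prod_eq_zero (Finset.mem_univ i)
    simp [hi1, hi2]

/-- Determinant of the cyclic lower-bidiagonal matrix, any positive size. -/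
lemma det_cyclic_bidiag' (n : ℕ) [NeZero n] (c : Fin n → ℝ) :
    (Matrix.of fun j k : Fin n =>
      (if j = k then (1:ℝ) else 0) + (if j = k + 1 then c k else 0)).det
    = 1 + (-1 : ℝ) ^ (n + 1) * ∏ k, c k := by
  rcases n with _ | n
  · exact absurd rfl (NeZero.ne 0)
  rcases n with _ | m
  · rw [Matrix.det_fin_one]
    simp [Fin.prod_univ_one]
  · rw [det_cyclic_bidiag m c]
    congr 1
    have : (-1 : ℝ) ^ (m + 2 + 1) = (-1) ^ (m + 1) := by
      rw [show m + 2 + 1 = (m + 1) + 2 by ring, pow_add]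
      norm_num
    rw [this]

/-- A matrix unit evaluated entrywise, as a product of indicators. -/
lemma sb_eq (n : ℕ) (a b j k : Fin n) :
    Matrix.single a b (1:ℝ) j k
      = (if j = a then (1:ℝ) else 0) * (if k = b then 1 else 0) := by
  by_cases h1 : a = j <;> by_cases h2 : b = k <;>
    simp [Matrix.single, h1, h2, eq_comm]

/-- Determinant of the cyclic tridiagonal matrix `Δₙ(u)`:
`det Δₙ(u) = (1 - u₁²⋯uₙ²)² / ∏ᵢ (1 - uᵢ⁴)`. -/
theorem stmt_6 (n : ℕ) [NeZero n] (u : Fin n → ℝ) (hu : ∀ i, u i ∈ Set.Ioo (0 : ℝ) 1)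
    (Δ : Matrix (Fin n) (Fin n) ℝ)
    (hΔ : Δ = ∑ i : Fin n,
      ((1 / (1 - u i ^ 4) - 1 / 2) •
          (Matrix.single i i (1 : ℝ) + Matrix.single (i + 1) (i + 1) 1)
        + (-(u i ^ 2) / (1 - u i ^ 4)) •
          (Matrix.single i (i + 1) (1 : ℝ) + Matrix.single (i + 1) i 1))) :
    Δ.det = (1 - ∏ i, u i ^ 2) ^ 2 / ∏ i, (1 - u i ^ 4) := by
  have hu4 : ∀ i, (1 : ℝ) - u i ^ 4 ≠ 0 := by
    intro i
    obtain ⟨h0, h1⟩ := hu i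
    have : u i ^ 4 < 1 := pow_lt_one₀ h0.le h1 (by norm_num)
    linarith
  set K : Matrix (Fin n) (Fin n) ℝ := Matrix.of fun j k =>
    (if j = k then (1:ℝ) else 0) + (if j = k + 1 then -(u k ^ 2) else 0) with hK
  set D : Matrix (Fin n) (Fin n) ℝ := Matrix.diagonal (fun i => 1 / (1 - u i ^ 4)) with hD
  -- Step 1: the factorization `Δ = K * D * Kᵀ`.
  have hfact : Δ = K * D * Kᵀ := by
    ext j k
    rw [Matrix.mul_assoc, Matrix.mul_apply, hΔ]
    simp only [Matrix.sum_apply, Matrix.add_apply, Matrix.smul_apply, smul_eq_mul, sb_eq,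
      hD, Matrix.diagonal_mul, Matrix.transpose_apply, hK, Matrix.of_apply]
    have tele : ∑ i : Fin n, ((if j = i + 1 then (1:ℝ) else 0) * (if k = i + 1 then 1 else 0))
        = ∑ i : Fin n, ((if j = i then (1:ℝ) else 0) * (if k = i then 1 else 0)) :=
      Fintype.sum_equiv (Equiv.addRight 1) _ _ (fun i => rfl)
    have key : ∀ i : Fin n,
        (1 / (1 - u i ^ 4) - 1 / 2) *
            ((if j = i then (1:ℝ) else 0) * (if k = i then 1 else 0)
              + (if j = i + 1 then (1:ℝ) else 0) * (if k = i + 1 then 1 else 0))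
          + -(u i ^ 2) / (1 - u i ^ 4) *
            ((if j = i then (1:ℝ) else 0) * (if k = i + 1 then 1 else 0)
              + (if j = i + 1 then (1:ℝ) else 0) * (if k = i then 1 else 0))
        = ((if j = i then (1:ℝ) else 0) + (if j = i + 1 then -(u i ^ 2) else 0)) *
            (1 / (1 - u i ^ 4) *
              ((if k = i then (1:ℝ) else 0) + (if k = i + 1 then -(u i ^ 2) else 0)))
          + (1/2) * ((if j = i + 1 then (1:ℝ) else 0) * (if k = i + 1 then 1 else 0))
          - (1/2) * ((if j = i then (1:ℝ) else 0) * (if k = i then 1 else 0)) := by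
      intro i
      have hne := hu4 i
      have hsplit : (if j = i + 1 then -(u i ^ 2) else 0)
          = -(u i ^ 2) * (if j = i + 1 then (1:ℝ) else 0) := by split_ifs <;> ring
      have hsplit' : (if k = i + 1 then -(u i ^ 2) else 0)
          = -(u i ^ 2) * (if k = i + 1 then (1:ℝ) else 0) := by split_ifs <;> ring
      rw [hsplit, hsplit']
      set P1 := (if j = i then (1:ℝ) else 0)
      set P2 := (if j = i + 1 then (1:ℝ) else 0)
      set Q1 := (if k = i then (1:ℝ) else 0)
      set Q2 := (if k = i + 1 then (1:ℝ) else 0)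
      field_simp
      ring
    calc (∑ i : Fin n,
        ((1 / (1 - u i ^ 4) - 1 / 2) *
            ((if j = i then (1:ℝ) else 0) * (if k = i then 1 else 0)
              + (if j = i + 1 then (1:ℝ) else 0) * (if k = i + 1 then 1 else 0))
          + -(u i ^ 2) / (1 - u i ^ 4) *
            ((if j = i then (1:ℝ) else 0) * (if k = i + 1 then 1 else 0)
              + (if j = i + 1 then (1:ℝ) else 0) * (if k = i then 1 else 0))))
        = ∑ i : Fin n,
          (((if j = i then (1:ℝ) else 0) + (if j = i + 1 then -(u i ^ 2) else 0)) *
            (1 / (1 - u i ^ 4) *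
              ((if k = i then (1:ℝ) else 0) + (if k = i + 1 then -(u i ^ 2) else 0)))
          + (1/2) * ((if j = i + 1 then (1:ℝ) else 0) * (if k = i + 1 then 1 else 0))
          - (1/2) * ((if j = i then (1:ℝ) else 0) * (if k = i then 1 else 0))) :=
            Finset.sum_congr rfl (fun i _ => key i)
      _ = ∑ i : Fin n,
          ((if j = i then (1:ℝ) else 0) + (if j = i + 1 then -(u i ^ 2) else 0)) *
            (1 / (1 - u i ^ 4) *
              ((if k = i then (1:ℝ) else 0) + (if k = i + 1 then -(u i ^ 2) else 0))) := by
          rw [Finset.sum_sub_distrib, Finset.sum_add_distrib, ← Finset.mul_sum,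
            ← Finset.mul_sum, tele]
          ring
  -- Step 2: determinant of the bidiagonal factor.
  have hdetK : K.det = 1 - ∏ i, u i ^ 2 := by
    rw [hK, det_cyclic_bidiag' n (fun k => -(u k ^ 2))]
    have hprodneg : ∏ k : Fin n, -(u k ^ 2) = (-1 : ℝ) ^ n * ∏ k, u k ^ 2 := by
      rw [Finset.prod_congr rfl (fun k _ => (by ring : -(u k ^ 2) = (-1) * u k ^ 2)),
        Finset.prod_mul_distrib]
      simp [Finset.card_univ]
    rw [hprodneg, ← mul_assoc, ← pow_add]
    have hodd : Odd (n + 1 + n) := ⟨n, by ring⟩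
    rw [hodd.neg_one_pow]
    ring
  -- Step 3: conclude.
  have hprod0 : (∏ i : Fin n, (1 - u i ^ 4)) ≠ 0 := Finset.prod_ne_zero_iff.mpr fun i _ => hu4 i
  rw [hfact, Matrix.det_mul, Matrix.det_mul, Matrix.det_transpose, hdetK, hD,
    Matrix.det_diagonal]
  rw [Finset.prod_congr rfl (fun i _ => (one_div _ : 1 / (1 - u i ^ 4) = (1 - u i ^ 4)⁻¹)),
    Finset.prod_inv_distrib]
  field_simp
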